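/- Expectation of a product of two third-order Wick polynomials of centered variables with vanishing third cumulants expands into pairings plus higher cumulant terms: if all first and third order joint cumulants of a_1,...,a_6 vanish, then E[:a_1a_2a_3:·:a_4a_5a_6:] = Σ over the 6 pairings matching {1,2,3} with {4,5,6} of the products κ(a_i,a_j)κ(a_k,a_l)κ(a_m,a_n), plus κ(a_1,...,a_6), plus the 9 terms of the form κ_2·κ_4 in which the pair and the quadruple each intersect both {1,2,3} and {4,5,6}. -/
import Mathlib

open MeasureTheory Finset

/-- The moment `E[y^A]` of the labeled family `(y i)_{i ∈ A}`. -/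
noncomputable def mom {Ω : Type*} [MeasurableSpace Ω] {ι : Type*}
    (μ : Measure Ω) (y : ι → Ω → ℝ) (A : Finset ι) : ℝ :=
  ∫ ω, ∏ i ∈ A, y i ω ∂μ

open scoped Classical in
/-- Set partitions of a finite (label) set `A`: finsets of nonempty pairwise
disjoint blocks whose union is `A`. -/
noncomputable def partitionsOf {ι : Type*} (A : Finset ι) : Finset (Finset (Finset ι)) :=
  A.powerset.powerset.filter fun π =>
    (∀ B ∈ π, B.Nonempty) ∧ (∀ B ∈ π, ∀ C ∈ π, B ≠ C → Disjoint B C) ∧ π.sup id = A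

/-- The joint cumulant `κ[y_A]`, defined by the (Möbius-inverted form of the)
moments-to-cumulants recursion. -/
noncomputable def cum {Ω : Type*} [MeasurableSpace Ω] {ι : Type*}
    (μ : Measure Ω) (y : ι → Ω → ℝ) (A : Finset ι) : ℝ :=
  ∑ π ∈ partitionsOf A,
    (-1 : ℝ) ^ (π.card - 1) * (Nat.factorial (π.card - 1)) * ∏ B ∈ π, mom μ y B

/-- The Wick polynomial `:y^I:` defined by the recursion
`:y^I: = y^I − Σ_{∅≠E⊆I} E[y^E]·:y^{I∖E}:`, with `:y^∅: = 1`. -/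
noncomputable def wick {Ω : Type*} [MeasurableSpace Ω] {ι : Type*} [DecidableEq ι]
    (μ : Measure Ω) (y : ι → Ω → ℝ) (I : Finset ι) : Ω → ℝ :=
  fun ω => (∏ i ∈ I, y i ω) -
    ∑ E ∈ (I.powerset.filter fun E => E ≠ ∅).attach,
      mom μ y E.1 * wick μ y (I \ E.1) ω
termination_by I.card
decreasing_by
  have h := E.2
  simp only [Finset.mem_filter, Finset.mem_powerset] at h
  exact Finset.card_lt_card (Finset.sdiff_ssubset h.1 (Finset.nonempty_iff_ne_empty.mpr h.2))

lemma partitionsOf_eq {ι : Type*} [DecidableEq ι] (A : Finset ι) :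
    partitionsOf A = A.powerset.powerset.filter (fun π =>
    (∀ B ∈ π, B.Nonempty) ∧ (∀ B ∈ π, ∀ C ∈ π, B ≠ C → Disjoint B C) ∧ π.sup id = A) := by
  simp only [partitionsOf]
  congr!

lemma mem_partitionsOf {ι : Type*} [DecidableEq ι] {A : Finset ι} {π : Finset (Finset ι)} :
    π ∈ partitionsOf A ↔ (∀ B ∈ π, B ⊆ A) ∧ (∀ B ∈ π, B.Nonempty) ∧
      (∀ B ∈ π, ∀ C ∈ π, B ≠ C → Disjoint B C) ∧ π.sup id = A := by
  rw [partitionsOf_eq, Finset.mem_filter, Finset.mem_powerset]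
  constructor
  · rintro ⟨hs, h1, h2, h3⟩
    exact ⟨fun B hB => Finset.mem_powerset.mp (hs hB), h1, h2, h3⟩
  · rintro ⟨hs, h1, h2, h3⟩
    exact ⟨fun B hB => Finset.mem_powerset.mpr (hs B hB), h1, h2, h3⟩

lemma exists_decomp {ι : Type*} [DecidableEq ι] {a : ι} {A : Finset ι} (ha : a ∉ A)
    {π : Finset (Finset ι)} (hπ : π ∈ partitionsOf (insert a A)) :
    ∃ S, S ⊆ A ∧ ∃ π', π' ∈ partitionsOf (A \ S) ∧ π = insert (insert a S) π' := by
  rw [mem_partitionsOf] at hπ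
  obtain ⟨hsub, hblk, hdis, hsup⟩ := hπ
  have ha' : ∃ B ∈ π, a ∈ B := by
    have : a ∈ π.sup id := by rw [hsup]; exact Finset.mem_insert_self a A
    simpa using Finset.mem_sup.mp this
  obtain ⟨B, hBπ, haB⟩ := ha'
  have hBsub : B ⊆ insert a A := hsub B hBπ
  have hBins : B = insert a (B.erase a) := (Finset.insert_erase haB).symm
  refine ⟨B.erase a, ?_, π.erase B, ?_, ?_⟩
  · intro x hx
    rcases Finset.mem_insert.mp (hBsub (Finset.mem_of_mem_erase hx)) with h | h
    · subst h; exact absurd hx (Finset.notMem_erase x B)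
    · exact h
  · rw [mem_partitionsOf]
    have hCsub : ∀ C ∈ π.erase B, C ⊆ A \ B.erase a := by
      intro C hC x hxC
      have hCπ := Finset.mem_of_mem_erase hC
      have hCB : C ≠ B := Finset.ne_of_mem_erase hC
      have hdisCB := hdis C hCπ B hBπ hCB
      have hxB : x ∉ B := fun hxB => (Finset.disjoint_left.mp hdisCB hxC) hxB
      have hxa : x ≠ a := fun h => hxB (h ▸ haB)
      rcases Finset.mem_insert.mp (hsub C hCπ hxC) with h | h
      · exact absurd h hxa
      · exact Finset.mem_sdiff.mpr ⟨h, fun hx => hxB (Finset.mem_of_mem_erase hx)⟩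
    refine ⟨hCsub, fun C hC => hblk C (Finset.mem_of_mem_erase hC),
      fun C hC D hD h => hdis _ (Finset.mem_of_mem_erase hC) _ (Finset.mem_of_mem_erase hD) h, ?_⟩
    apply le_antisymm
    · exact Finset.sup_le fun C hC => hCsub C hC
    · intro x hx
      obtain ⟨hxA, hxS⟩ := Finset.mem_sdiff.mp hx
      have hx' : x ∈ π.sup id := by rw [hsup]; exact Finset.mem_insert_of_mem hxA
      obtain ⟨C, hCπ, hxC⟩ := Finset.mem_sup.mp hx'
      have hCB : C ≠ B := by
        rintro rfl
        have hxa : x ≠ a := fun h => ha (h ▸ hxA)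
        exact hxS (Finset.mem_erase.mpr ⟨hxa, hxC⟩)
      exact Finset.mem_sup.mpr ⟨C, Finset.mem_erase.mpr ⟨hCB, hCπ⟩, hxC⟩
  · rw [← hBins]; exact (Finset.insert_erase hBπ).symm

lemma small_block {ι : Type*} [DecidableEq ι] {T : Finset ι} (hTne : T.Nonempty)
    (hT : T.card ≤ 3) {π : Finset (Finset ι)}
    (hπ : π ∈ partitionsOf T) (hne : π ≠ {T}) : ∃ B ∈ π, B.card = 1 := by
  rw [mem_partitionsOf] at hπ
  obtain ⟨hsub, hblk, hdis, hsup⟩ := hπ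
  by_contra hno
  push_neg at hno
  have h2 : ∀ B ∈ π, 2 ≤ B.card := by
    intro B hB
    have h1 := Finset.card_pos.mpr (hblk B hB)
    have := hno B hB
    omega
  obtain ⟨x, hx⟩ := hTne
  have hx' : x ∈ π.sup id := by rw [hsup]; exact hx
  obtain ⟨B, hBπ, hxB⟩ := Finset.mem_sup.mp hx'
  by_cases hBT : B = T
  · apply hne
    apply Finset.eq_singleton_iff_unique_mem.mpr
    refine ⟨hBT ▸ hBπ, ?_⟩
    intro C hCπ
    by_contra hCT
    have hdisC := hdis C hCπ B hBπ (fun h => hCT (h.trans hBT))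
    obtain ⟨y, hy⟩ := hblk C hCπ
    have hyT : y ∈ T := hsub C hCπ hy
    exact (Finset.disjoint_left.mp hdisC hy) (hBT ▸ hyT)
  · have hBsub : B ⊆ T := hsub B hBπ
    have hy : ∃ y, y ∈ T ∧ y ∉ B := by
      by_contra h; push_neg at h
      exact hBT (Finset.Subset.antisymm hBsub h)
    obtain ⟨y, hyT, hyB⟩ := hy
    have hy' : y ∈ π.sup id := by rw [hsup]; exact hyT
    obtain ⟨C, hCπ, hyC⟩ := Finset.mem_sup.mp hy'
    have hCB : C ≠ B := fun h => hyB (h ▸ hyC)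
    have hdisC := hdis C hCπ B hBπ hCB
    have hunion : C ∪ B ⊆ T := Finset.union_subset (hsub C hCπ) hBsub
    have hcard := Finset.card_union_of_disjoint hdisC
    have h3 := Finset.card_le_card hunion
    have := h2 C hCπ; have := h2 B hBπ
    omega

lemma cum_eq_mom_small {Ω : Type*} [MeasurableSpace Ω] (μ : Measure Ω) (a : Fin 6 → Ω → ℝ)
    (hm1 : ∀ B : Finset (Fin 6), B.card = 1 → mom μ a B = 0)
    {T : Finset (Fin 6)} (hTne : T.Nonempty) (hT : T.card ≤ 3) :
    cum μ a T = mom μ a T := by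
  rw [cum]
  rw [Finset.sum_eq_single_of_mem {T} ?mem ?zero]
  · simp
  case mem =>
    rw [mem_partitionsOf]
    refine ⟨fun B hB => ?_, fun B hB => ?_, fun B hB C hC h => ?_, ?_⟩
    · simp only [Finset.mem_singleton] at hB; subst hB; rfl
    · simp only [Finset.mem_singleton] at hB; subst hB; exact hTne
    · simp only [Finset.mem_singleton] at hB hC; subst hB; subst hC; exact absurd rfl h
    · exact Finset.sup_singleton
  case zero =>
    intro π hπ hne
    obtain ⟨B, hBπ, hB1⟩ := small_block hTne hT hπ hne
    exact mul_eq_zero_of_right _ (Finset.prod_eq_zero hBπ (hm1 B hB1))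

section WickComp
variable {Ω : Type*} [MeasurableSpace Ω] (μ : Measure Ω) (a : Fin 6 → Ω → ℝ)

lemma wick_explicit (I : Finset (Fin 6)) (L : Finset (Finset (Fin 6)))
    (hL : I.powerset.filter (fun E => E ≠ ∅) = L) (ω : Ω) :
    wick μ a I ω = (∏ i ∈ I, a i ω) - ∑ E ∈ L, mom μ a E * wick μ a (I \ E) ω := by
  rw [wick.eq_def, ← hL, Finset.sum_attach _ (fun E => mom μ a E * wick μ a (I \ E) ω)]

lemma wick_empty (ω : Ω) : wick μ a (∅ : Finset (Fin 6)) ω = 1 := by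
  rw [wick_explicit μ a _ ∅ (by decide)]; simp

lemma wick_s0 (hm1 : ∀ B : Finset (Fin 6), B.card = 1 → mom μ a B = 0) (ω : Ω) :
    wick μ a ({0} : Finset (Fin 6)) ω = a 0 ω := by
  rw [wick_explicit μ a _ {{0}} (by decide), Finset.sum_singleton,
      show ({0} : Finset (Fin 6)) \ {0} = ∅ from by decide, wick_empty,
      hm1 {0} (by decide)]
  simp

lemma wick_s1 (hm1 : ∀ B : Finset (Fin 6), B.card = 1 → mom μ a B = 0) (ω : Ω) :
    wick μ a ({1} : Finset (Fin 6)) ω = a 1 ω := by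
  rw [wick_explicit μ a _ {{1}} (by decide), Finset.sum_singleton,
      show ({1} : Finset (Fin 6)) \ {1} = ∅ from by decide, wick_empty,
      hm1 {1} (by decide)]
  simp

lemma wick_s2 (hm1 : ∀ B : Finset (Fin 6), B.card = 1 → mom μ a B = 0) (ω : Ω) :
    wick μ a ({2} : Finset (Fin 6)) ω = a 2 ω := by
  rw [wick_explicit μ a _ {{2}} (by decide), Finset.sum_singleton,
      show ({2} : Finset (Fin 6)) \ {2} = ∅ from by decide, wick_empty,
      hm1 {2} (by decide)]
  simp

lemma wick_s3 (hm1 : ∀ B : Finset (Fin 6), B.card = 1 → mom μ a B = 0) (ω : Ω) :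
    wick μ a ({3} : Finset (Fin 6)) ω = a 3 ω := by
  rw [wick_explicit μ a _ {{3}} (by decide), Finset.sum_singleton,
      show ({3} : Finset (Fin 6)) \ {3} = ∅ from by decide, wick_empty,
      hm1 {3} (by decide)]
  simp

lemma wick_s4 (hm1 : ∀ B : Finset (Fin 6), B.card = 1 → mom μ a B = 0) (ω : Ω) :
    wick μ a ({4} : Finset (Fin 6)) ω = a 4 ω := by
  rw [wick_explicit μ a _ {{4}} (by decide), Finset.sum_singleton,
      show ({4} : Finset (Fin 6)) \ {4} = ∅ from by decide, wick_empty,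
      hm1 {4} (by decide)]
  simp

lemma wick_s5 (hm1 : ∀ B : Finset (Fin 6), B.card = 1 → mom μ a B = 0) (ω : Ω) :
    wick μ a ({5} : Finset (Fin 6)) ω = a 5 ω := by
  rw [wick_explicit μ a _ {{5}} (by decide), Finset.sum_singleton,
      show ({5} : Finset (Fin 6)) \ {5} = ∅ from by decide, wick_empty,
      hm1 {5} (by decide)]
  simp

lemma wick_p01 (hm1 : ∀ B : Finset (Fin 6), B.card = 1 → mom μ a B = 0) (ω : Ω) :
    wick μ a ({0,1} : Finset (Fin 6)) ω = a 0 ω * a 1 ω - mom μ a {0,1} := by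
  rw [wick_explicit μ a _ {{0},{1},{0,1}} (by decide),
      Finset.sum_insert (by decide), Finset.sum_insert (by decide), Finset.sum_singleton,
      show ({0,1} : Finset (Fin 6)) \ {0} = {1} from by decide,
      show ({0,1} : Finset (Fin 6)) \ {1} = {0} from by decide,
      show ({0,1} : Finset (Fin 6)) \ {0,1} = ∅ from by decide,
      wick_s1 μ a hm1, wick_s0 μ a hm1, wick_empty,
      hm1 {0} (by decide), hm1 {1} (by decide),
      show (∏ i ∈ ({0,1} : Finset (Fin 6)), a i ω) = a 0 ω * a 1 ω from by
        rw [Finset.prod_insert (by decide), Finset.prod_singleton]]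
  ring

lemma wick_p02 (hm1 : ∀ B : Finset (Fin 6), B.card = 1 → mom μ a B = 0) (ω : Ω) :
    wick μ a ({0,2} : Finset (Fin 6)) ω = a 0 ω * a 2 ω - mom μ a {0,2} := by
  rw [wick_explicit μ a _ {{0},{2},{0,2}} (by decide),
      Finset.sum_insert (by decide), Finset.sum_insert (by decide), Finset.sum_singleton,
      show ({0,2} : Finset (Fin 6)) \ {0} = {2} from by decide,
      show ({0,2} : Finset (Fin 6)) \ {2} = {0} from by decide,
      show ({0,2} : Finset (Fin 6)) \ {0,2} = ∅ from by decide,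
      wick_s2 μ a hm1, wick_s0 μ a hm1, wick_empty,
      hm1 {0} (by decide), hm1 {2} (by decide),
      show (∏ i ∈ ({0,2} : Finset (Fin 6)), a i ω) = a 0 ω * a 2 ω from by
        rw [Finset.prod_insert (by decide), Finset.prod_singleton]]
  ring

lemma wick_p12 (hm1 : ∀ B : Finset (Fin 6), B.card = 1 → mom μ a B = 0) (ω : Ω) :
    wick μ a ({1,2} : Finset (Fin 6)) ω = a 1 ω * a 2 ω - mom μ a {1,2} := by
  rw [wick_explicit μ a _ {{1},{2},{1,2}} (by decide),
      Finset.sum_insert (by decide), Finset.sum_insert (by decide), Finset.sum_singleton,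
      show ({1,2} : Finset (Fin 6)) \ {1} = {2} from by decide,
      show ({1,2} : Finset (Fin 6)) \ {2} = {1} from by decide,
      show ({1,2} : Finset (Fin 6)) \ {1,2} = ∅ from by decide,
      wick_s2 μ a hm1, wick_s1 μ a hm1, wick_empty,
      hm1 {1} (by decide), hm1 {2} (by decide),
      show (∏ i ∈ ({1,2} : Finset (Fin 6)), a i ω) = a 1 ω * a 2 ω from by
        rw [Finset.prod_insert (by decide), Finset.prod_singleton]]
  ring

lemma wick_p34 (hm1 : ∀ B : Finset (Fin 6), B.card = 1 → mom μ a B = 0) (ω : Ω) :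
    wick μ a ({3,4} : Finset (Fin 6)) ω = a 3 ω * a 4 ω - mom μ a {3,4} := by
  rw [wick_explicit μ a _ {{3},{4},{3,4}} (by decide),
      Finset.sum_insert (by decide), Finset.sum_insert (by decide), Finset.sum_singleton,
      show ({3,4} : Finset (Fin 6)) \ {3} = {4} from by decide,
      show ({3,4} : Finset (Fin 6)) \ {4} = {3} from by decide,
      show ({3,4} : Finset (Fin 6)) \ {3,4} = ∅ from by decide,
      wick_s4 μ a hm1, wick_s3 μ a hm1, wick_empty,
      hm1 {3} (by decide), hm1 {4} (by decide),
      show (∏ i ∈ ({3,4} : Finset (Fin 6)), a i ω) = a 3 ω * a 4 ω from by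
        rw [Finset.prod_insert (by decide), Finset.prod_singleton]]
  ring

lemma wick_p35 (hm1 : ∀ B : Finset (Fin 6), B.card = 1 → mom μ a B = 0) (ω : Ω) :
    wick μ a ({3,5} : Finset (Fin 6)) ω = a 3 ω * a 5 ω - mom μ a {3,5} := by
  rw [wick_explicit μ a _ {{3},{5},{3,5}} (by decide),
      Finset.sum_insert (by decide), Finset.sum_insert (by decide), Finset.sum_singleton,
      show ({3,5} : Finset (Fin 6)) \ {3} = {5} from by decide,
      show ({3,5} : Finset (Fin 6)) \ {5} = {3} from by decide,
      show ({3,5} : Finset (Fin 6)) \ {3,5} = ∅ from by decide,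
      wick_s5 μ a hm1, wick_s3 μ a hm1, wick_empty,
      hm1 {3} (by decide), hm1 {5} (by decide),
      show (∏ i ∈ ({3,5} : Finset (Fin 6)), a i ω) = a 3 ω * a 5 ω from by
        rw [Finset.prod_insert (by decide), Finset.prod_singleton]]
  ring

lemma wick_p45 (hm1 : ∀ B : Finset (Fin 6), B.card = 1 → mom μ a B = 0) (ω : Ω) :
    wick μ a ({4,5} : Finset (Fin 6)) ω = a 4 ω * a 5 ω - mom μ a {4,5} := by
  rw [wick_explicit μ a _ {{4},{5},{4,5}} (by decide),
      Finset.sum_insert (by decide), Finset.sum_insert (by decide), Finset.sum_singleton,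
      show ({4,5} : Finset (Fin 6)) \ {4} = {5} from by decide,
      show ({4,5} : Finset (Fin 6)) \ {5} = {4} from by decide,
      show ({4,5} : Finset (Fin 6)) \ {4,5} = ∅ from by decide,
      wick_s5 μ a hm1, wick_s4 μ a hm1, wick_empty,
      hm1 {4} (by decide), hm1 {5} (by decide),
      show (∏ i ∈ ({4,5} : Finset (Fin 6)), a i ω) = a 4 ω * a 5 ω from by
        rw [Finset.prod_insert (by decide), Finset.prod_singleton]]
  ring

lemma wick_t012 (hm1 : ∀ B : Finset (Fin 6), B.card = 1 → mom μ a B = 0)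
    (hm3 : ∀ B : Finset (Fin 6), B.card = 3 → mom μ a B = 0) (ω : Ω) :
    wick μ a ({0,1,2} : Finset (Fin 6)) ω = a 0 ω * a 1 ω * a 2 ω
      - mom μ a {0,1} * a 2 ω - mom μ a {0,2} * a 1 ω
      - mom μ a {1,2} * a 0 ω := by
  rw [wick_explicit μ a _ {{0},{1},{2},{0,1},{0,2},{1,2},{0,1,2}} (by decide),
      Finset.sum_insert (by decide), Finset.sum_insert (by decide), Finset.sum_insert (by decide),
      Finset.sum_insert (by decide), Finset.sum_insert (by decide), Finset.sum_insert (by decide),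
      Finset.sum_singleton,
      show ({0,1,2} : Finset (Fin 6)) \ {0} = {1,2} from by decide,
      show ({0,1,2} : Finset (Fin 6)) \ {1} = {0,2} from by decide,
      show ({0,1,2} : Finset (Fin 6)) \ {2} = {0,1} from by decide,
      show ({0,1,2} : Finset (Fin 6)) \ {0,1} = {2} from by decide,
      show ({0,1,2} : Finset (Fin 6)) \ {0,2} = {1} from by decide,
      show ({0,1,2} : Finset (Fin 6)) \ {1,2} = {0} from by decide,
      show ({0,1,2} : Finset (Fin 6)) \ {0,1,2} = ∅ from by decide,
      wick_p12 μ a hm1, wick_p02 μ a hm1, wick_p01 μ a hm1,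
      wick_s0 μ a hm1, wick_s1 μ a hm1, wick_s2 μ a hm1, wick_empty,
      hm1 {0} (by decide), hm1 {1} (by decide), hm1 {2} (by decide),
      hm3 {0,1,2} (by decide),
      show (∏ i ∈ ({0,1,2} : Finset (Fin 6)), a i ω) = a 0 ω * a 1 ω * a 2 ω from by
        rw [Finset.prod_insert (by decide), Finset.prod_insert (by decide), Finset.prod_singleton, mul_assoc]]
  ring

lemma wick_t345 (hm1 : ∀ B : Finset (Fin 6), B.card = 1 → mom μ a B = 0)
    (hm3 : ∀ B : Finset (Fin 6), B.card = 3 → mom μ a B = 0) (ω : Ω) :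
    wick μ a ({3,4,5} : Finset (Fin 6)) ω = a 3 ω * a 4 ω * a 5 ω
      - mom μ a {3,4} * a 5 ω - mom μ a {3,5} * a 4 ω
      - mom μ a {4,5} * a 3 ω := by
  rw [wick_explicit μ a _ {{3},{4},{5},{3,4},{3,5},{4,5},{3,4,5}} (by decide),
      Finset.sum_insert (by decide), Finset.sum_insert (by decide), Finset.sum_insert (by decide),
      Finset.sum_insert (by decide), Finset.sum_insert (by decide), Finset.sum_insert (by decide),
      Finset.sum_singleton,
      show ({3,4,5} : Finset (Fin 6)) \ {3} = {4,5} from by decide,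
      show ({3,4,5} : Finset (Fin 6)) \ {4} = {3,5} from by decide,
      show ({3,4,5} : Finset (Fin 6)) \ {5} = {3,4} from by decide,
      show ({3,4,5} : Finset (Fin 6)) \ {3,4} = {5} from by decide,
      show ({3,4,5} : Finset (Fin 6)) \ {3,5} = {4} from by decide,
      show ({3,4,5} : Finset (Fin 6)) \ {4,5} = {3} from by decide,
      show ({3,4,5} : Finset (Fin 6)) \ {3,4,5} = ∅ from by decide,
      wick_p45 μ a hm1, wick_p35 μ a hm1, wick_p34 μ a hm1,
      wick_s3 μ a hm1, wick_s4 μ a hm1, wick_s5 μ a hm1, wick_empty,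
      hm1 {3} (by decide), hm1 {4} (by decide), hm1 {5} (by decide),
      hm3 {3,4,5} (by decide),
      show (∏ i ∈ ({3,4,5} : Finset (Fin 6)), a i ω) = a 3 ω * a 4 ω * a 5 ω from by
        rw [Finset.prod_insert (by decide), Finset.prod_insert (by decide), Finset.prod_singleton, mul_assoc]]
  ring


noncomputable def Cv {Ω : Type*} [MeasurableSpace Ω] (μ : Measure Ω) (a : Fin 6 → Ω → ℝ) :
    Fin 16 → ℝ := ![(1:ℝ), -(mom μ a {3,4}), -(mom μ a {3,5}), -(mom μ a {4,5}), -(mom μ a {0,1}), -(mom μ a {0,2}), -(mom μ a {1,2}), mom μ a {0,1} * mom μ a {3,4}, mom μ a {0,1} * mom μ a {3,5}, mom μ a {0,1} * mom μ a {4,5}, mom μ a {0,2} * mom μ a {3,4}, mom μ a {0,2} * mom μ a {3,5}, mom μ a {0,2} * mom μ a {4,5}, mom μ a {1,2} * mom μ a {3,4}, mom μ a {1,2} * mom μ a {3,5}, mom μ a {1,2} * mom μ a {4,5}]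

def Av : Fin 16 → Finset (Fin 6) := ![{0,1,2,3,4,5}, {0,1,2,5}, {0,1,2,4}, {0,1,2,3}, {2,3,4,5}, {1,3,4,5}, {0,3,4,5}, {2,5}, {2,4}, {2,3}, {1,5}, {1,4}, {1,3}, {0,5}, {0,4}, {0,3}]

set_option maxHeartbeats 1000000 in
lemma lhs_eval (hint : ∀ A : Finset (Fin 6), Integrable (fun ω => ∏ i ∈ A, a i ω) μ)
    (hm1 : ∀ B : Finset (Fin 6), B.card = 1 → mom μ a B = 0)
    (hm3 : ∀ B : Finset (Fin 6), B.card = 3 → mom μ a B = 0) :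
    (∫ ω, wick μ a ({0, 1, 2} : Finset (Fin 6)) ω *
        wick μ a ({3, 4, 5} : Finset (Fin 6)) ω ∂μ)
    = ((1:ℝ)) * mom μ a {0,1,2,3,4,5} + (-(mom μ a {3,4})) * mom μ a {0,1,2,5} + (-(mom μ a {3,5})) * mom μ a {0,1,2,4} + (-(mom μ a {4,5})) * mom μ a {0,1,2,3} + (-(mom μ a {0,1})) * mom μ a {2,3,4,5} + (-(mom μ a {0,2})) * mom μ a {1,3,4,5} + (-(mom μ a {1,2})) * mom μ a {0,3,4,5} + (mom μ a {0,1} * mom μ a {3,4}) * mom μ a {2,5} + (mom μ a {0,1} * mom μ a {3,5}) * mom μ a {2,4} + (mom μ a {0,1} * mom μ a {4,5}) * mom μ a {2,3} + (mom μ a {0,2} * mom μ a {3,4}) * mom μ a {1,5} + (mom μ a {0,2} * mom μ a {3,5}) * mom μ a {1,4} + (mom μ a {0,2} * mom μ a {4,5}) * mom μ a {1,3} + (mom μ a {1,2} * mom μ a {3,4}) * mom μ a {0,5} + (mom μ a {1,2} * mom μ a {3,5}) * mom μ a {0,4} + (mom μ a {1,2} * mom μ a {4,5}) * mom μ a {0,3}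 := by
  rw [show (fun ω => wick μ a ({0, 1, 2} : Finset (Fin 6)) ω *
        wick μ a ({3, 4, 5} : Finset (Fin 6)) ω)
      = fun ω => ∑ k : Fin 16, Cv μ a k * ∏ i ∈ Av k, a i ω from funext fun ω => by
    rw [wick_t012 μ a hm1 hm3, wick_t345 μ a hm1 hm3]
    simp +decide [Fin.sum_univ_succ, Cv, Av, Finset.prod_insert, Finset.prod_singleton]
    ring]
  rw [MeasureTheory.integral_finset_sum _ (fun k _ => ((hint (Av k)).const_mul (Cv μ a k)))]
  rw [show (fun k => ∫ ω, Cv μ a k * ∏ i ∈ Av k, a i ω ∂μ) = fun k => Cv μ a k * mom μ a (Av k)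
      from funext fun k => by rw [MeasureTheory.integral_const_mul]; rfl]
  simp +decide [Fin.sum_univ_succ, Cv, Av]
  ring

end WickComp
set_option maxRecDepth 4000 in
lemma cum4_1245 {Ω : Type*} [MeasurableSpace Ω] (μ : Measure Ω) (a : Fin 6 → Ω → ℝ)
    (hz : ∀ s : Finset (Finset (Fin 6)), (∃ B ∈ s, B.card = 1 ∨ B.card = 3) →
      ∏ B ∈ s, mom μ a B = 0) :
    cum μ a ({1,2,4,5} : Finset (Fin 6)) = mom μ a {1,2,4,5}
      - mom μ a {1,2} * mom μ a {4,5} - mom μ a {1,4} * mom μ a {2,5}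
      - mom μ a {1,5} * mom μ a {2,4} := by
  rw [cum]
  rw [← Finset.sum_subset (s₁ := ({{{1,2,4,5}}, {{1,2},{4,5}}, {{1,4},{2,5}}, {{1,5},{2,4}}} : Finset (Finset (Finset (Fin 6))))) ?hsub ?hvan]
  · rw [Finset.sum_insert (by decide), Finset.sum_insert (by decide),
        Finset.sum_insert (by decide), Finset.sum_singleton]
    simp +decide [Finset.card_insert_of_notMem, Finset.prod_insert]
    ring
  case hsub =>
    intro π hπ
    fin_cases hπ <;> (rw [mem_partitionsOf]; exact ⟨by decide, by decide, by decide, by decide⟩)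
  case hvan =>
    intro π hπ hne
    obtain ⟨S, hS, π', hπ', rfl⟩ := exists_decomp (by decide) hπ
    have h8 : ∀ S : Finset (Fin 6), S ⊆ {2,4,5} → S = ∅ ∨ S = {2} ∨ S = {4} ∨ S = {5} ∨ S = {2,4} ∨ S = {2,5} ∨ S = {4,5} ∨ S = {2,4,5} := by decide
    rcases h8 S hS with rfl|rfl|rfl|rfl|rfl|rfl|rfl|rfl <;>
      first
      | exact mul_eq_zero_of_right _ (hz _ ⟨_, Finset.mem_insert_self _ _, by decide⟩)
      | (rw [partitionsOf_eq] at hπ'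
         fin_cases hπ' <;>
           first
           | exact absurd (by decide) hne
           | exact mul_eq_zero_of_right _ (hz _ (by decide)))

set_option maxRecDepth 4000 in
lemma cum4_1235 {Ω : Type*} [MeasurableSpace Ω] (μ : Measure Ω) (a : Fin 6 → Ω → ℝ)
    (hz : ∀ s : Finset (Finset (Fin 6)), (∃ B ∈ s, B.card = 1 ∨ B.card = 3) →
      ∏ B ∈ s, mom μ a B = 0) :
    cum μ a ({1,2,3,5} : Finset (Fin 6)) = mom μ a {1,2,3,5}
      - mom μ a {1,2} * mom μ a {3,5} - mom μ a {1,3} * mom μ a {2,5}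
      - mom μ a {1,5} * mom μ a {2,3} := by
  rw [cum]
  rw [← Finset.sum_subset (s₁ := ({{{1,2,3,5}}, {{1,2},{3,5}}, {{1,3},{2,5}}, {{1,5},{2,3}}} : Finset (Finset (Finset (Fin 6))))) ?hsub ?hvan]
  · rw [Finset.sum_insert (by decide), Finset.sum_insert (by decide),
        Finset.sum_insert (by decide), Finset.sum_singleton]
    simp +decide [Finset.card_insert_of_notMem, Finset.prod_insert]
    ring
  case hsub =>
    intro π hπ
    fin_cases hπ <;> (rw [mem_partitionsOf]; exact ⟨by decide, by decide, by decide, by decide⟩)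
  case hvan =>
    intro π hπ hne
    obtain ⟨S, hS, π', hπ', rfl⟩ := exists_decomp (by decide) hπ
    have h8 : ∀ S : Finset (Fin 6), S ⊆ {2,3,5} → S = ∅ ∨ S = {2} ∨ S = {3} ∨ S = {5} ∨ S = {2,3} ∨ S = {2,5} ∨ S = {3,5} ∨ S = {2,3,5} := by decide
    rcases h8 S hS with rfl|rfl|rfl|rfl|rfl|rfl|rfl|rfl <;>
      first
      | exact mul_eq_zero_of_right _ (hz _ ⟨_, Finset.mem_insert_self _ _, by decide⟩)
      | (rw [partitionsOf_eq] at hπ'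
         fin_cases hπ' <;>
           first
           | exact absurd (by decide) hne
           | exact mul_eq_zero_of_right _ (hz _ (by decide)))

set_option maxRecDepth 4000 in
lemma cum4_1234 {Ω : Type*} [MeasurableSpace Ω] (μ : Measure Ω) (a : Fin 6 → Ω → ℝ)
    (hz : ∀ s : Finset (Finset (Fin 6)), (∃ B ∈ s, B.card = 1 ∨ B.card = 3) →
      ∏ B ∈ s, mom μ a B = 0) :
    cum μ a ({1,2,3,4} : Finset (Fin 6)) = mom μ a {1,2,3,4}
      - mom μ a {1,2} * mom μ a {3,4} - mom μ a {1,3} * mom μ a {2,4}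
      - mom μ a {1,4} * mom μ a {2,3} := by
  rw [cum]
  rw [← Finset.sum_subset (s₁ := ({{{1,2,3,4}}, {{1,2},{3,4}}, {{1,3},{2,4}}, {{1,4},{2,3}}} : Finset (Finset (Finset (Fin 6))))) ?hsub ?hvan]
  · rw [Finset.sum_insert (by decide), Finset.sum_insert (by decide),
        Finset.sum_insert (by decide), Finset.sum_singleton]
    simp +decide [Finset.card_insert_of_notMem, Finset.prod_insert]
    ring
  case hsub =>
    intro π hπ
    fin_cases hπ <;> (rw [mem_partitionsOf]; exact ⟨by decide, by decide, by decide, by decide⟩)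
  case hvan =>
    intro π hπ hne
    obtain ⟨S, hS, π', hπ', rfl⟩ := exists_decomp (by decide) hπ
    have h8 : ∀ S : Finset (Fin 6), S ⊆ {2,3,4} → S = ∅ ∨ S = {2} ∨ S = {3} ∨ S = {4} ∨ S = {2,3} ∨ S = {2,4} ∨ S = {3,4} ∨ S = {2,3,4} := by decide
    rcases h8 S hS with rfl|rfl|rfl|rfl|rfl|rfl|rfl|rfl <;>
      first
      | exact mul_eq_zero_of_right _ (hz _ ⟨_, Finset.mem_insert_self _ _, by decide⟩)
      | (rw [partitionsOf_eq] at hπ'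
         fin_cases hπ' <;>
           first
           | exact absurd (by decide) hne
           | exact mul_eq_zero_of_right _ (hz _ (by decide)))

set_option maxRecDepth 4000 in
lemma cum4_0245 {Ω : Type*} [MeasurableSpace Ω] (μ : Measure Ω) (a : Fin 6 → Ω → ℝ)
    (hz : ∀ s : Finset (Finset (Fin 6)), (∃ B ∈ s, B.card = 1 ∨ B.card = 3) →
      ∏ B ∈ s, mom μ a B = 0) :
    cum μ a ({0,2,4,5} : Finset (Fin 6)) = mom μ a {0,2,4,5}
      - mom μ a {0,2} * mom μ a {4,5} - mom μ a {0,4} * mom μ a {2,5}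
      - mom μ a {0,5} * mom μ a {2,4} := by
  rw [cum]
  rw [← Finset.sum_subset (s₁ := ({{{0,2,4,5}}, {{0,2},{4,5}}, {{0,4},{2,5}}, {{0,5},{2,4}}} : Finset (Finset (Finset (Fin 6))))) ?hsub ?hvan]
  · rw [Finset.sum_insert (by decide), Finset.sum_insert (by decide),
        Finset.sum_insert (by decide), Finset.sum_singleton]
    simp +decide [Finset.card_insert_of_notMem, Finset.prod_insert]
    ring
  case hsub =>
    intro π hπ
    fin_cases hπ <;> (rw [mem_partitionsOf]; exact ⟨by decide, by decide, by decide, by decide⟩)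
  case hvan =>
    intro π hπ hne
    obtain ⟨S, hS, π', hπ', rfl⟩ := exists_decomp (by decide) hπ
    have h8 : ∀ S : Finset (Fin 6), S ⊆ {2,4,5} → S = ∅ ∨ S = {2} ∨ S = {4} ∨ S = {5} ∨ S = {2,4} ∨ S = {2,5} ∨ S = {4,5} ∨ S = {2,4,5} := by decide
    rcases h8 S hS with rfl|rfl|rfl|rfl|rfl|rfl|rfl|rfl <;>
      first
      | exact mul_eq_zero_of_right _ (hz _ ⟨_, Finset.mem_insert_self _ _, by decide⟩)
      | (rw [partitionsOf_eq] at hπ'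
         fin_cases hπ' <;>
           first
           | exact absurd (by decide) hne
           | exact mul_eq_zero_of_right _ (hz _ (by decide)))

set_option maxRecDepth 4000 in
lemma cum4_0235 {Ω : Type*} [MeasurableSpace Ω] (μ : Measure Ω) (a : Fin 6 → Ω → ℝ)
    (hz : ∀ s : Finset (Finset (Fin 6)), (∃ B ∈ s, B.card = 1 ∨ B.card = 3) →
      ∏ B ∈ s, mom μ a B = 0) :
    cum μ a ({0,2,3,5} : Finset (Fin 6)) = mom μ a {0,2,3,5}
      - mom μ a {0,2} * mom μ a {3,5} - mom μ a {0,3} * mom μ a {2,5}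
      - mom μ a {0,5} * mom μ a {2,3} := by
  rw [cum]
  rw [← Finset.sum_subset (s₁ := ({{{0,2,3,5}}, {{0,2},{3,5}}, {{0,3},{2,5}}, {{0,5},{2,3}}} : Finset (Finset (Finset (Fin 6))))) ?hsub ?hvan]
  · rw [Finset.sum_insert (by decide), Finset.sum_insert (by decide),
        Finset.sum_insert (by decide), Finset.sum_singleton]
    simp +decide [Finset.card_insert_of_notMem, Finset.prod_insert]
    ring
  case hsub =>
    intro π hπ
    fin_cases hπ <;> (rw [mem_partitionsOf]; exact ⟨by decide, by decide, by decide, by decide⟩)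
  case hvan =>
    intro π hπ hne
    obtain ⟨S, hS, π', hπ', rfl⟩ := exists_decomp (by decide) hπ
    have h8 : ∀ S : Finset (Fin 6), S ⊆ {2,3,5} → S = ∅ ∨ S = {2} ∨ S = {3} ∨ S = {5} ∨ S = {2,3} ∨ S = {2,5} ∨ S = {3,5} ∨ S = {2,3,5} := by decide
    rcases h8 S hS with rfl|rfl|rfl|rfl|rfl|rfl|rfl|rfl <;>
      first
      | exact mul_eq_zero_of_right _ (hz _ ⟨_, Finset.mem_insert_self _ _, by decide⟩)
      | (rw [partitionsOf_eq] at hπ'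
         fin_cases hπ' <;>
           first
           | exact absurd (by decide) hne
           | exact mul_eq_zero_of_right _ (hz _ (by decide)))

set_option maxRecDepth 4000 in
lemma cum4_0234 {Ω : Type*} [MeasurableSpace Ω] (μ : Measure Ω) (a : Fin 6 → Ω → ℝ)
    (hz : ∀ s : Finset (Finset (Fin 6)), (∃ B ∈ s, B.card = 1 ∨ B.card = 3) →
      ∏ B ∈ s, mom μ a B = 0) :
    cum μ a ({0,2,3,4} : Finset (Fin 6)) = mom μ a {0,2,3,4}
      - mom μ a {0,2} * mom μ a {3,4} - mom μ a {0,3} * mom μ a {2,4}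
      - mom μ a {0,4} * mom μ a {2,3} := by
  rw [cum]
  rw [← Finset.sum_subset (s₁ := ({{{0,2,3,4}}, {{0,2},{3,4}}, {{0,3},{2,4}}, {{0,4},{2,3}}} : Finset (Finset (Finset (Fin 6))))) ?hsub ?hvan]
  · rw [Finset.sum_insert (by decide), Finset.sum_insert (by decide),
        Finset.sum_insert (by decide), Finset.sum_singleton]
    simp +decide [Finset.card_insert_of_notMem, Finset.prod_insert]
    ring
  case hsub =>
    intro π hπ
    fin_cases hπ <;> (rw [mem_partitionsOf]; exact ⟨by decide, by decide, by decide, by decide⟩)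
  case hvan =>
    intro π hπ hne
    obtain ⟨S, hS, π', hπ', rfl⟩ := exists_decomp (by decide) hπ
    have h8 : ∀ S : Finset (Fin 6), S ⊆ {2,3,4} → S = ∅ ∨ S = {2} ∨ S = {3} ∨ S = {4} ∨ S = {2,3} ∨ S = {2,4} ∨ S = {3,4} ∨ S = {2,3,4} := by decide
    rcases h8 S hS with rfl|rfl|rfl|rfl|rfl|rfl|rfl|rfl <;>
      first
      | exact mul_eq_zero_of_right _ (hz _ ⟨_, Finset.mem_insert_self _ _, by decide⟩)
      | (rw [partitionsOf_eq] at hπ'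
         fin_cases hπ' <;>
           first
           | exact absurd (by decide) hne
           | exact mul_eq_zero_of_right _ (hz _ (by decide)))

set_option maxRecDepth 4000 in
lemma cum4_0145 {Ω : Type*} [MeasurableSpace Ω] (μ : Measure Ω) (a : Fin 6 → Ω → ℝ)
    (hz : ∀ s : Finset (Finset (Fin 6)), (∃ B ∈ s, B.card = 1 ∨ B.card = 3) →
      ∏ B ∈ s, mom μ a B = 0) :
    cum μ a ({0,1,4,5} : Finset (Fin 6)) = mom μ a {0,1,4,5}
      - mom μ a {0,1} * mom μ a {4,5} - mom μ a {0,4} * mom μ a {1,5}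
      - mom μ a {0,5} * mom μ a {1,4} := by
  rw [cum]
  rw [← Finset.sum_subset (s₁ := ({{{0,1,4,5}}, {{0,1},{4,5}}, {{0,4},{1,5}}, {{0,5},{1,4}}} : Finset (Finset (Finset (Fin 6))))) ?hsub ?hvan]
  · rw [Finset.sum_insert (by decide), Finset.sum_insert (by decide),
        Finset.sum_insert (by decide), Finset.sum_singleton]
    simp +decide [Finset.card_insert_of_notMem, Finset.prod_insert]
    ring
  case hsub =>
    intro π hπ
    fin_cases hπ <;> (rw [mem_partitionsOf]; exact ⟨by decide, by decide, by decide, by decide⟩)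
  case hvan =>
    intro π hπ hne
    obtain ⟨S, hS, π', hπ', rfl⟩ := exists_decomp (by decide) hπ
    have h8 : ∀ S : Finset (Fin 6), S ⊆ {1,4,5} → S = ∅ ∨ S = {1} ∨ S = {4} ∨ S = {5} ∨ S = {1,4} ∨ S = {1,5} ∨ S = {4,5} ∨ S = {1,4,5} := by decide
    rcases h8 S hS with rfl|rfl|rfl|rfl|rfl|rfl|rfl|rfl <;>
      first
      | exact mul_eq_zero_of_right _ (hz _ ⟨_, Finset.mem_insert_self _ _, by decide⟩)
      | (rw [partitionsOf_eq] at hπ'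
         fin_cases hπ' <;>
           first
           | exact absurd (by decide) hne
           | exact mul_eq_zero_of_right _ (hz _ (by decide)))

set_option maxRecDepth 4000 in
lemma cum4_0135 {Ω : Type*} [MeasurableSpace Ω] (μ : Measure Ω) (a : Fin 6 → Ω → ℝ)
    (hz : ∀ s : Finset (Finset (Fin 6)), (∃ B ∈ s, B.card = 1 ∨ B.card = 3) →
      ∏ B ∈ s, mom μ a B = 0) :
    cum μ a ({0,1,3,5} : Finset (Fin 6)) = mom μ a {0,1,3,5}
      - mom μ a {0,1} * mom μ a {3,5} - mom μ a {0,3} * mom μ a {1,5}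
      - mom μ a {0,5} * mom μ a {1,3} := by
  rw [cum]
  rw [← Finset.sum_subset (s₁ := ({{{0,1,3,5}}, {{0,1},{3,5}}, {{0,3},{1,5}}, {{0,5},{1,3}}} : Finset (Finset (Finset (Fin 6))))) ?hsub ?hvan]
  · rw [Finset.sum_insert (by decide), Finset.sum_insert (by decide),
        Finset.sum_insert (by decide), Finset.sum_singleton]
    simp +decide [Finset.card_insert_of_notMem, Finset.prod_insert]
    ring
  case hsub =>
    intro π hπ
    fin_cases hπ <;> (rw [mem_partitionsOf]; exact ⟨by decide, by decide, by decide, by decide⟩)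
  case hvan =>
    intro π hπ hne
    obtain ⟨S, hS, π', hπ', rfl⟩ := exists_decomp (by decide) hπ
    have h8 : ∀ S : Finset (Fin 6), S ⊆ {1,3,5} → S = ∅ ∨ S = {1} ∨ S = {3} ∨ S = {5} ∨ S = {1,3} ∨ S = {1,5} ∨ S = {3,5} ∨ S = {1,3,5} := by decide
    rcases h8 S hS with rfl|rfl|rfl|rfl|rfl|rfl|rfl|rfl <;>
      first
      | exact mul_eq_zero_of_right _ (hz _ ⟨_, Finset.mem_insert_self _ _, by decide⟩)
      | (rw [partitionsOf_eq] at hπ'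
         fin_cases hπ' <;>
           first
           | exact absurd (by decide) hne
           | exact mul_eq_zero_of_right _ (hz _ (by decide)))

set_option maxRecDepth 4000 in
lemma cum4_0134 {Ω : Type*} [MeasurableSpace Ω] (μ : Measure Ω) (a : Fin 6 → Ω → ℝ)
    (hz : ∀ s : Finset (Finset (Fin 6)), (∃ B ∈ s, B.card = 1 ∨ B.card = 3) →
      ∏ B ∈ s, mom μ a B = 0) :
    cum μ a ({0,1,3,4} : Finset (Fin 6)) = mom μ a {0,1,3,4}
      - mom μ a {0,1} * mom μ a {3,4} - mom μ a {0,3} * mom μ a {1,4}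
      - mom μ a {0,4} * mom μ a {1,3} := by
  rw [cum]
  rw [← Finset.sum_subset (s₁ := ({{{0,1,3,4}}, {{0,1},{3,4}}, {{0,3},{1,4}}, {{0,4},{1,3}}} : Finset (Finset (Finset (Fin 6))))) ?hsub ?hvan]
  · rw [Finset.sum_insert (by decide), Finset.sum_insert (by decide),
        Finset.sum_insert (by decide), Finset.sum_singleton]
    simp +decide [Finset.card_insert_of_notMem, Finset.prod_insert]
    ring
  case hsub =>
    intro π hπ
    fin_cases hπ <;> (rw [mem_partitionsOf]; exact ⟨by decide, by decide, by decide, by decide⟩)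
  case hvan =>
    intro π hπ hne
    obtain ⟨S, hS, π', hπ', rfl⟩ := exists_decomp (by decide) hπ
    have h8 : ∀ S : Finset (Fin 6), S ⊆ {1,3,4} → S = ∅ ∨ S = {1} ∨ S = {3} ∨ S = {4} ∨ S = {1,3} ∨ S = {1,4} ∨ S = {3,4} ∨ S = {1,3,4} := by decide
    rcases h8 S hS with rfl|rfl|rfl|rfl|rfl|rfl|rfl|rfl <;>
      first
      | exact mul_eq_zero_of_right _ (hz _ ⟨_, Finset.mem_insert_self _ _, by decide⟩)
      | (rw [partitionsOf_eq] at hπ'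
         fin_cases hπ' <;>
           first
           | exact absurd (by decide) hne
           | exact mul_eq_zero_of_right _ (hz _ (by decide)))

set_option maxRecDepth 8000 in
set_option maxHeartbeats 4000000 in
lemma cumU_eval {Ω : Type*} [MeasurableSpace Ω] (μ : Measure Ω) (a : Fin 6 → Ω → ℝ)
    (hz : ∀ s : Finset (Finset (Fin 6)), (∃ B ∈ s, B.card = 1 ∨ B.card = 3) →
      ∏ B ∈ s, mom μ a B = 0) :
    cum μ a (Finset.univ : Finset (Fin 6)) = mom μ a {0,1,2,3,4,5}
      - (mom μ a {0,1} * mom μ a {2,3,4,5} + mom μ a {0,2} * mom μ a {1,3,4,5} + mom μ a {0,3} * mom μ a {1,2,4,5} + mom μ a {0,4} * mom μ a {1,2,3,5} + mom μ a {0,5} * mom μ a {1,2,3,4} + mom μ a {1,2} * mom μ a {0,3,4,5} + mom μ a {1,3} * mom μ a {0,2,4,5} + mom μ a {1,4} * mom μ a {0,2,3,5} + mom μ a {1,5} * mom μ a {0,2,3,4} + mom μ a {2,3} * mom μ a {0,1,4,5} + mom μ a {2,4} * mom μ a {0,1,3,5} + mom μ a {2,5} * mom μ a {0,1,3,4} +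 mom μ a {3,4} * mom μ a {0,1,2,5} + mom μ a {3,5} * mom μ a {0,1,2,4} + mom μ a {4,5} * mom μ a {0,1,2,3})
      + 2 * (mom μ a {0,1} * mom μ a {2,3} * mom μ a {4,5} + mom μ a {0,1} * mom μ a {2,4} * mom μ a {3,5} + mom μ a {0,1} * mom μ a {2,5} * mom μ a {3,4} + mom μ a {0,2} * mom μ a {1,3} * mom μ a {4,5} + mom μ a {0,2} * mom μ a {1,4} * mom μ a {3,5} + mom μ a {0,2} * mom μ a {1,5} * mom μ a {3,4} + mom μ a {0,3} * mom μ a {1,2} * mom μ a {4,5} + mom μ a {0,3} * mom μ a {1,4} * mom μ a {2,5} + mom μ a {0,3} * mom μ a {1,5} * mom μ a {2,4} + mom μ a {0,4} * mom μ a {1,2} * mom μ a {3,5} + mom μ a {0,4} * mom μ a {1,3} * mom μ a {2,5} + mom μ a {0,4} * mom μ a {1,5} * mom μ a {2,3} + mom μ a {0,5} * mom μ a {1,2} * mom μ a {3,4} + mom μ a {0,5} * mom μ a {1,3} * mom μ a {2,4} + mom μ a {0,5} * mom μ a {1,4} * mom μ a {2,3}) := by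
  rw [cum]
  rw [show (Finset.univ : Finset (Fin 6)) = insert 0 {1,2,3,4,5} from by decide]
  rw [← Finset.sum_subset (s₁ := ({{{0,1,2,3,4,5}}, {{0,1},{2,3,4,5}}, {{0,2},{1,3,4,5}}, {{0,3},{1,2,4,5}}, {{0,4},{1,2,3,5}}, {{0,5},{1,2,3,4}}, {{1,2},{0,3,4,5}}, {{1,3},{0,2,4,5}}, {{1,4},{0,2,3,5}}, {{1,5},{0,2,3,4}}, {{2,3},{0,1,4,5}}, {{2,4},{0,1,3,5}}, {{2,5},{0,1,3,4}}, {{3,4},{0,1,2,5}}, {{3,5},{0,1,2,4}}, {{4,5},{0,1,2,3}}, {{0,1},{2,3},{4,5}}, {{0,1},{2,4},{3,5}}, {{0,1},{2,5},{3,4}}, {{0,2},{1,3},{4,5}}, {{0,2},{1,4},{3,5}}, {{0,2},{1,5},{3,4}}, {{0,3},{1,2},{4,5}}, {{0,3},{1,4},{2,5}}, {{0,3},{1,5},{2,4}}, {{0,4},{1,2},{3,5}}, {{0,4},{1,3},{2,5}}, {{0,4},{1,5},{2,3}}, {{0,5},{1,2},{3,4}}, {{0,5},{1,3},{2,4}},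 {{0,5},{1,4},{2,3}}} : Finset (Finset (Finset (Fin 6))))) ?hsub ?hvan]
  · rw [        Finset.sum_insert (by decide),
        Finset.sum_insert (by decide),
        Finset.sum_insert (by decide),
        Finset.sum_insert (by decide),
        Finset.sum_insert (by decide),
        Finset.sum_insert (by decide),
        Finset.sum_insert (by decide),
        Finset.sum_insert (by decide),
        Finset.sum_insert (by decide),
        Finset.sum_insert (by decide),
        Finset.sum_insert (by decide),
        Finset.sum_insert (by decide),
        Finset.sum_insert (by decide),
        Finset.sum_insert (by decide),
        Finset.sum_insert (by decide),
        Finset.sum_insert (by decide),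
        Finset.sum_insert (by decide),
        Finset.sum_insert (by decide),
        Finset.sum_insert (by decide),
        Finset.sum_insert (by decide),
        Finset.sum_insert (by decide),
        Finset.sum_insert (by decide),
        Finset.sum_insert (by decide),
        Finset.sum_insert (by decide),
        Finset.sum_insert (by decide),
        Finset.sum_insert (by decide),
        Finset.sum_insert (by decide),
        Finset.sum_insert (by decide),
        Finset.sum_insert (by decide),
        Finset.sum_insert (by decide),
        Finset.sum_singleton]
    simp +decide [Finset.card_insert_of_notMem, Finset.prod_insert]
    ring
  case hsub =>
    intro π hπ
    fin_cases hπ <;> (rw [mem_partitionsOf]; exact ⟨by decide, by decide, by decide, by decide⟩)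
  case hvan =>
    intro π hπ hne
    obtain ⟨S, hS, π', hπ', rfl⟩ := exists_decomp (by decide) hπ
    have h32 : ∀ S : Finset (Fin 6), S ⊆ {1,2,3,4,5} → S = ∅ ∨ S = {1} ∨ S = {2} ∨ S = {3} ∨ S = {4} ∨ S = {5} ∨ S = {1,2} ∨ S = {1,3} ∨ S = {1,4} ∨ S = {1,5} ∨ S = {2,3} ∨ S = {2,4} ∨ S = {2,5} ∨ S = {3,4} ∨ S = {3,5} ∨ S = {4,5} ∨ S = {1,2,3} ∨ S = {1,2,4} ∨ S = {1,2,5} ∨ S = {1,3,4} ∨ S = {1,3,5} ∨ S = {1,4,5} ∨ S = {2,3,4} ∨ S = {2,3,5} ∨ S = {2,4,5} ∨ S = {3,4,5} ∨ S = {1,2,3,4} ∨ S = {1,2,3,5} ∨ S = {1,2,4,5} ∨ S = {1,3,4,5} ∨ S = {2,3,4,5} ∨ S = {1,2,3,4,5} := by decide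
    rcases h32 S hS with rfl|rfl|rfl|rfl|rfl|rfl|rfl|rfl|rfl|rfl|rfl|rfl|rfl|rfl|rfl|rfl|rfl|rfl|rfl|rfl|rfl|rfl|rfl|rfl|rfl|rfl|rfl|rfl|rfl|rfl|rfl|rfl
    · exact mul_eq_zero_of_right _ (hz _ ⟨_, Finset.mem_insert_self _ _, by decide⟩)
    · have hπ2 : π' ∈ partitionsOf (insert 2 ({3,4,5} : Finset (Fin 6))) := by
        rw [show insert (2:Fin 6) ({3,4,5} : Finset (Fin 6)) = {1,2,3,4,5} \ {1} from by decide]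
        exact hπ'
      obtain ⟨S', hS', π'', hπ'', rfl⟩ := exists_decomp (by decide) hπ2
      have h8 : ∀ S' : Finset (Fin 6), S' ⊆ {3,4,5} → S' = ∅ ∨ S' = {3} ∨ S' = {4} ∨ S' = {5} ∨ S' = {3,4} ∨ S' = {3,5} ∨ S' = {4,5} ∨ S' = {3,4,5} := by decide
      rcases h8 S' hS' with rfl|rfl|rfl|rfl|rfl|rfl|rfl|rfl <;>
        first
        | exact mul_eq_zero_of_right _ (hz _ ⟨_, Finset.mem_insert_of_mem (Finset.mem_insert_self _ _), by decide⟩)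
        | (rw [partitionsOf_eq] at hπ''
           fin_cases hπ'' <;>
             first
             | exact absurd (by decide) hne
             | exact mul_eq_zero_of_right _ (hz _ (by decide)))
    · have hπ2 : π' ∈ partitionsOf (insert 1 ({3,4,5} : Finset (Fin 6))) := by
        rw [show insert (1:Fin 6) ({3,4,5} : Finset (Fin 6)) = {1,2,3,4,5} \ {2} from by decide]
        exact hπ'
      obtain ⟨S', hS', π'', hπ'', rfl⟩ := exists_decomp (by decide) hπ2
      have h8 : ∀ S' : Finset (Fin 6), S' ⊆ {3,4,5} → S' = ∅ ∨ S' = {3} ∨ S' = {4} ∨ S' = {5} ∨ S' = {3,4} ∨ S' = {3,5} ∨ S' = {4,5} ∨ S' = {3,4,5} := by decide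
      rcases h8 S' hS' with rfl|rfl|rfl|rfl|rfl|rfl|rfl|rfl <;>
        first
        | exact mul_eq_zero_of_right _ (hz _ ⟨_, Finset.mem_insert_of_mem (Finset.mem_insert_self _ _), by decide⟩)
        | (rw [partitionsOf_eq] at hπ''
           fin_cases hπ'' <;>
             first
             | exact absurd (by decide) hne
             | exact mul_eq_zero_of_right _ (hz _ (by decide)))
    · have hπ2 : π' ∈ partitionsOf (insert 1 ({2,4,5} : Finset (Fin 6))) := by
        rw [show insert (1:Fin 6) ({2,4,5} : Finset (Fin 6)) = {1,2,3,4,5} \ {3} from by decide]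
        exact hπ'
      obtain ⟨S', hS', π'', hπ'', rfl⟩ := exists_decomp (by decide) hπ2
      have h8 : ∀ S' : Finset (Fin 6), S' ⊆ {2,4,5} → S' = ∅ ∨ S' = {2} ∨ S' = {4} ∨ S' = {5} ∨ S' = {2,4} ∨ S' = {2,5} ∨ S' = {4,5} ∨ S' = {2,4,5} := by decide
      rcases h8 S' hS' with rfl|rfl|rfl|rfl|rfl|rfl|rfl|rfl <;>
        first
        | exact mul_eq_zero_of_right _ (hz _ ⟨_, Finset.mem_insert_of_mem (Finset.mem_insert_self _ _), by decide⟩)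
        | (rw [partitionsOf_eq] at hπ''
           fin_cases hπ'' <;>
             first
             | exact absurd (by decide) hne
             | exact mul_eq_zero_of_right _ (hz _ (by decide)))
    · have hπ2 : π' ∈ partitionsOf (insert 1 ({2,3,5} : Finset (Fin 6))) := by
        rw [show insert (1:Fin 6) ({2,3,5} : Finset (Fin 6)) = {1,2,3,4,5} \ {4} from by decide]
        exact hπ'
      obtain ⟨S', hS', π'', hπ'', rfl⟩ := exists_decomp (by decide) hπ2
      have h8 : ∀ S' : Finset (Fin 6), S' ⊆ {2,3,5} → S' = ∅ ∨ S' = {2} ∨ S' = {3} ∨ S' = {5} ∨ S' = {2,3} ∨ S' = {2,5} ∨ S' = {3,5} ∨ S' = {2,3,5} := by decide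
      rcases h8 S' hS' with rfl|rfl|rfl|rfl|rfl|rfl|rfl|rfl <;>
        first
        | exact mul_eq_zero_of_right _ (hz _ ⟨_, Finset.mem_insert_of_mem (Finset.mem_insert_self _ _), by decide⟩)
        | (rw [partitionsOf_eq] at hπ''
           fin_cases hπ'' <;>
             first
             | exact absurd (by decide) hne
             | exact mul_eq_zero_of_right _ (hz _ (by decide)))
    · have hπ2 : π' ∈ partitionsOf (insert 1 ({2,3,4} : Finset (Fin 6))) := by
        rw [show insert (1:Fin 6) ({2,3,4} : Finset (Fin 6)) = {1,2,3,4,5} \ {5} from by decide]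
        exact hπ'
      obtain ⟨S', hS', π'', hπ'', rfl⟩ := exists_decomp (by decide) hπ2
      have h8 : ∀ S' : Finset (Fin 6), S' ⊆ {2,3,4} → S' = ∅ ∨ S' = {2} ∨ S' = {3} ∨ S' = {4} ∨ S' = {2,3} ∨ S' = {2,4} ∨ S' = {3,4} ∨ S' = {2,3,4} := by decide
      rcases h8 S' hS' with rfl|rfl|rfl|rfl|rfl|rfl|rfl|rfl <;>
        first
        | exact mul_eq_zero_of_right _ (hz _ ⟨_, Finset.mem_insert_of_mem (Finset.mem_insert_self _ _), by decide⟩)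
        | (rw [partitionsOf_eq] at hπ''
           fin_cases hπ'' <;>
             first
             | exact absurd (by decide) hne
             | exact mul_eq_zero_of_right _ (hz _ (by decide)))
    · exact mul_eq_zero_of_right _ (hz _ ⟨_, Finset.mem_insert_self _ _, by decide⟩)
    · exact mul_eq_zero_of_right _ (hz _ ⟨_, Finset.mem_insert_self _ _, by decide⟩)
    · exact mul_eq_zero_of_right _ (hz _ ⟨_, Finset.mem_insert_self _ _, by decide⟩)
    · exact mul_eq_zero_of_right _ (hz _ ⟨_, Finset.mem_insert_self _ _, by decide⟩)
    · exact mul_eq_zero_of_right _ (hz _ ⟨_, Finset.mem_insert_self _ _, by decide⟩)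
    · exact mul_eq_zero_of_right _ (hz _ ⟨_, Finset.mem_insert_self _ _, by decide⟩)
    · exact mul_eq_zero_of_right _ (hz _ ⟨_, Finset.mem_insert_self _ _, by decide⟩)
    · exact mul_eq_zero_of_right _ (hz _ ⟨_, Finset.mem_insert_self _ _, by decide⟩)
    · exact mul_eq_zero_of_right _ (hz _ ⟨_, Finset.mem_insert_self _ _, by decide⟩)
    · exact mul_eq_zero_of_right _ (hz _ ⟨_, Finset.mem_insert_self _ _, by decide⟩)
    · rw [partitionsOf_eq] at hπ'
      fin_cases hπ' <;>
        first
        | exact absurd (by decide) hne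
        | exact mul_eq_zero_of_right _ (hz _ (by decide))
    · rw [partitionsOf_eq] at hπ'
      fin_cases hπ' <;>
        first
        | exact absurd (by decide) hne
        | exact mul_eq_zero_of_right _ (hz _ (by decide))
    · rw [partitionsOf_eq] at hπ'
      fin_cases hπ' <;>
        first
        | exact absurd (by decide) hne
        | exact mul_eq_zero_of_right _ (hz _ (by decide))
    · rw [partitionsOf_eq] at hπ'
      fin_cases hπ' <;>
        first
        | exact absurd (by decide) hne
        | exact mul_eq_zero_of_right _ (hz _ (by decide))
    · rw [partitionsOf_eq] at hπ'
      fin_cases hπ' <;>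
        first
        | exact absurd (by decide) hne
        | exact mul_eq_zero_of_right _ (hz _ (by decide))
    · rw [partitionsOf_eq] at hπ'
      fin_cases hπ' <;>
        first
        | exact absurd (by decide) hne
        | exact mul_eq_zero_of_right _ (hz _ (by decide))
    · rw [partitionsOf_eq] at hπ'
      fin_cases hπ' <;>
        first
        | exact absurd (by decide) hne
        | exact mul_eq_zero_of_right _ (hz _ (by decide))
    · rw [partitionsOf_eq] at hπ'
      fin_cases hπ' <;>
        first
        | exact absurd (by decide) hne
        | exact mul_eq_zero_of_right _ (hz _ (by decide))
    · rw [partitionsOf_eq] at hπ'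
      fin_cases hπ' <;>
        first
        | exact absurd (by decide) hne
        | exact mul_eq_zero_of_right _ (hz _ (by decide))
    · rw [partitionsOf_eq] at hπ'
      fin_cases hπ' <;>
        first
        | exact absurd (by decide) hne
        | exact mul_eq_zero_of_right _ (hz _ (by decide))
    · rw [partitionsOf_eq] at hπ'
      fin_cases hπ' <;>
        first
        | exact absurd (by decide) hne
        | exact mul_eq_zero_of_right _ (hz _ (by decide))
    · rw [partitionsOf_eq] at hπ'
      fin_cases hπ' <;>
        first
        | exact absurd (by decide) hne
        | exact mul_eq_zero_of_right _ (hz _ (by decide))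
    · rw [partitionsOf_eq] at hπ'
      fin_cases hπ' <;>
        first
        | exact absurd (by decide) hne
        | exact mul_eq_zero_of_right _ (hz _ (by decide))
    · rw [partitionsOf_eq] at hπ'
      fin_cases hπ' <;>
        first
        | exact absurd (by decide) hne
        | exact mul_eq_zero_of_right _ (hz _ (by decide))
    · rw [partitionsOf_eq] at hπ'
      fin_cases hπ' <;>
        first
        | exact absurd (by decide) hne
        | exact mul_eq_zero_of_right _ (hz _ (by decide))
    · rw [partitionsOf_eq] at hπ'
      fin_cases hπ' <;>
        first
        | exact absurd (by decide) hne
        | exact mul_eq_zero_of_right _ (hz _ (by decide))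

set_option maxHeartbeats 1000000 in
/-- expectation of a product of two third-order Wick polynomials,
when first and third cumulants vanish, expands into the 6 crossing pairings,
the sixth cumulant, and the 9 crossing `κ₂·κ₄` terms. -/
theorem wick3_product_expansion {Ω : Type*} [MeasurableSpace Ω]
    (μ : Measure Ω) [IsProbabilityMeasure μ] (a : Fin 6 → Ω → ℝ)
    (hint : ∀ A : Finset (Fin 6), Integrable (fun ω => ∏ i ∈ A, a i ω) μ)
    (h1 : ∀ i : Fin 6, cum μ a {i} = 0)
    (h3 : ∀ A : Finset (Fin 6), A.card = 3 → cum μ a A = 0) :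
    (∫ ω, wick μ a ({0, 1, 2} : Finset (Fin 6)) ω *
        wick μ a ({3, 4, 5} : Finset (Fin 6)) ω ∂μ)
      = (∑ τ : Equiv.Perm (Fin 3), ∏ m : Fin 3,
            cum μ a {(⟨m.1, by omega⟩ : Fin 6), (⟨(τ m).1 + 3, by omega⟩ : Fin 6)})
        + cum μ a Finset.univ
        + ∑ p ∈ ({0, 1, 2} : Finset (Fin 6)), ∑ q ∈ ({3, 4, 5} : Finset (Fin 6)),
            cum μ a {p, q} * cum μ a (Finset.univ \ {p, q}) := by
  have hm1 : ∀ B : Finset (Fin 6), B.card = 1 → mom μ a B = 0 := by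
    intro B hB
    obtain ⟨i, rfl⟩ := Finset.card_eq_one.mp hB
    have h := h1 i
    rw [cum, show partitionsOf ({i} : Finset (Fin 6)) = {{{i}}} from by
        fin_cases i <;> (rw [partitionsOf_eq]; decide),
      Finset.sum_singleton] at h
    simpa using h
  have hm3 : ∀ B : Finset (Fin 6), B.card = 3 → mom μ a B = 0 := by
    intro B hB
    rw [← cum_eq_mom_small μ a hm1 (Finset.card_pos.mp (by omega)) (by omega)]
    exact h3 B hB
  have hz : ∀ s : Finset (Finset (Fin 6)), (∃ B ∈ s, B.card = 1 ∨ B.card = 3) →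
      ∏ B ∈ s, mom μ a B = 0 := by
    rintro s ⟨B, hB, h | h⟩
    · exact Finset.prod_eq_zero hB (hm1 B h)
    · exact Finset.prod_eq_zero hB (hm3 B h)
  have hc2 : ∀ p q : Fin 6, cum μ a {p, q} = mom μ a {p, q} := by
    intro p q
    refine cum_eq_mom_small μ a hm1 ⟨p, by simp⟩ ?_
    calc ({p, q} : Finset (Fin 6)).card ≤ ({q} : Finset (Fin 6)).card + 1 :=
          Finset.card_insert_le _ _
    _ ≤ 3 := by simp
  have sum012 : ∀ f : Fin 6 → ℝ, ∑ p ∈ ({0,1,2} : Finset (Fin 6)), f p = f 0 + f 1 + f 2 := by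
    intro f
    rw [Finset.sum_insert (by decide), Finset.sum_insert (by decide), Finset.sum_singleton]
    ring
  have sum345 : ∀ f : Fin 6 → ℝ, ∑ q ∈ ({3,4,5} : Finset (Fin 6)), f q = f 3 + f 4 + f 5 := by
    intro f
    rw [Finset.sum_insert (by decide), Finset.sum_insert (by decide), Finset.sum_singleton]
    ring
  have hperm : (∑ τ : Equiv.Perm (Fin 3), ∏ m : Fin 3,
      cum μ a {(⟨m.1, by omega⟩ : Fin 6), (⟨(τ m).1 + 3, by omega⟩ : Fin 6)})
      = mom μ a {0,3} * mom μ a {1,4} * mom μ a {2,5}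
      + mom μ a {0,3} * mom μ a {1,5} * mom μ a {2,4}
      + mom μ a {0,4} * mom μ a {1,3} * mom μ a {2,5}
      + mom μ a {0,4} * mom μ a {1,5} * mom μ a {2,3}
      + mom μ a {0,5} * mom μ a {1,3} * mom μ a {2,4}
      + mom μ a {0,5} * mom μ a {1,4} * mom μ a {2,3} := by
    rw [show (Finset.univ : Finset (Equiv.Perm (Fin 3))) =
      {1, Equiv.swap 0 1, Equiv.swap 0 2, Equiv.swap 1 2,
       Equiv.swap 0 1 * Equiv.swap 1 2, Equiv.swap 1 2 * Equiv.swap 0 1} from by decide]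
    rw [Finset.sum_insert (by decide), Finset.sum_insert (by decide),
        Finset.sum_insert (by decide), Finset.sum_insert (by decide),
        Finset.sum_insert (by decide), Finset.sum_singleton]
    have e0 : ∀ h, (⟨0, h⟩ : Fin 6) = 0 := fun _ => rfl
    have e1 : ∀ h, (⟨1, h⟩ : Fin 6) = 1 := fun _ => rfl
    have e2 : ∀ h, (⟨2, h⟩ : Fin 6) = 2 := fun _ => rfl
    have e3 : ∀ h, (⟨3, h⟩ : Fin 6) = 3 := fun _ => rfl
    have e4 : ∀ h, (⟨4, h⟩ : Fin 6) = 4 := fun _ => rfl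
    have e5 : ∀ h, (⟨5, h⟩ : Fin 6) = 5 := fun _ => rfl
    simp only [Fin.prod_univ_three, hc2]
    simp +decide [Equiv.swap_apply_def, Equiv.Perm.mul_apply, e0, e1, e2, e3, e4, e5]
    ring
  rw [lhs_eval μ a hint hm1 hm3, cumU_eval μ a hz, hperm, sum012]
  simp only [sum345]
  rw [
      show (Finset.univ : Finset (Fin 6)) \ {0,3} = {1,2,4,5} from by decide,
      show (Finset.univ : Finset (Fin 6)) \ {0,4} = {1,2,3,5} from by decide,
      show (Finset.univ : Finset (Fin 6)) \ {0,5} = {1,2,3,4} from by decide,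
      show (Finset.univ : Finset (Fin 6)) \ {1,3} = {0,2,4,5} from by decide,
      show (Finset.univ : Finset (Fin 6)) \ {1,4} = {0,2,3,5} from by decide,
      show (Finset.univ : Finset (Fin 6)) \ {1,5} = {0,2,3,4} from by decide,
      show (Finset.univ : Finset (Fin 6)) \ {2,3} = {0,1,4,5} from by decide,
      show (Finset.univ : Finset (Fin 6)) \ {2,4} = {0,1,3,5} from by decide,
      show (Finset.univ : Finset (Fin 6)) \ {2,5} = {0,1,3,4} from by decide,
      cum4_1245 μ a hz,
      cum4_1235 μ a hz,
      cum4_1234 μ a hz,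
      cum4_0245 μ a hz,
      cum4_0235 μ a hz,
      cum4_0234 μ a hz,
      cum4_0145 μ a hz,
      cum4_0135 μ a hz,
      cum4_0134 μ a hz]
  simp only [hc2]
  ring
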